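/- Let Y be {0,1}-valued with 0 < P(Y=1) < 1, X a random vector with finitely many values, and suppose E[Y | X] = Σᵢ fᵢ(Xᵢ) almost surely for some functions fᵢ of the individual coordinates, where the sum has positive variance. Then ρ_m(X,Y) equals the restricted maximal correlation ρ_m^lb(X,Y) obtained by restricting f in the definition to additively separable functions f(x) = Σᵢ ξᵢ(xᵢ). -/

import Mathlib

open MeasureTheory ProbabilityTheory

set_option maxHeartbeats 1000000 in
/-- If `Y` is binary and `E[Y | X]` is additively separable with positive variance,
then the HGR maximal correlation of `X = (X₁, …, X_p)` and `Y` equals the restricted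
maximal correlation over additively separable functions `f(x) = ∑ i, ξ i (x i)`. -/
theorem hgr_eq_separable_lb_of_additive_condexp {Ω : Type*} [MeasurableSpace Ω]
    (μ : Measure Ω) [IsProbabilityMeasure μ] (p m : ℕ)
    (X : Ω → (Fin p → Fin m)) (Y : Ω → ℝ) (hX : Measurable X) (hY : Measurable Y)
    (hbin : ∀ ω, Y ω = 0 ∨ Y ω = 1)
    (hp0 : 0 < (μ {ω | Y ω = 1}).toReal) (hp1 : (μ {ω | Y ω = 1}).toReal < 1)
    (f : Fin p → Fin m → ℝ)
    (hce : μ[Y | MeasurableSpace.comap X inferInstance] =ᵐ[μ]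
      fun ω => ∑ i, f i (X ω i))
    (hvar : 0 < variance (fun ω => ∑ i, f i (X ω i)) μ) :
    sSup {r : ℝ | ∃ F : (Fin p → Fin m) → ℝ, ∃ g : ℝ → ℝ,
        Measurable F ∧ Measurable g ∧
        (∫ ω, F (X ω) ∂μ) = 0 ∧ (∫ ω, g (Y ω) ∂μ) = 0 ∧
        (∫ ω, (F (X ω)) ^ 2 ∂μ) = 1 ∧ (∫ ω, (g (Y ω)) ^ 2 ∂μ) = 1 ∧
        r = ∫ ω, F (X ω) * g (Y ω) ∂μ} =
      sSup {r : ℝ | ∃ F : (Fin p → Fin m) → ℝ, ∃ g : ℝ → ℝ,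
        Measurable F ∧ Measurable g ∧
        (∃ ξ : Fin p → Fin m → ℝ, ∀ x, F x = ∑ i, ξ i (x i)) ∧
        (∫ ω, F (X ω) ∂μ) = 0 ∧ (∫ ω, g (Y ω) ∂μ) = 0 ∧
        (∫ ω, (F (X ω)) ^ 2 ∂μ) = 1 ∧ (∫ ω, (g (Y ω)) ^ 2 ∂μ) = 1 ∧
        r = ∫ ω, F (X ω) * g (Y ω) ∂μ} := by
  classical
  have hmX : MeasurableSpace.comap X inferInstance ≤ (inferInstance : MeasurableSpace Ω) :=
    hX.comap_le
  have hYbd : ∀ ω, |Y ω| ≤ 1 := by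
    intro ω; rcases hbin ω with h | h <;> simp [h]
  have hYint : Integrable Y μ :=
    ⟨hY.aestronglyMeasurable, HasFiniteIntegral.of_bounded (C := 1)
      (ae_of_all _ fun ω => by simpa [Real.norm_eq_abs] using hYbd ω)⟩
  have hmeasG : ∀ G : (Fin p → Fin m) → ℝ, Measurable fun ω => G (X ω) :=
    fun G => (measurable_of_countable G).comp hX
  -- master integrability lemma
  have intG : ∀ (G : (Fin p → Fin m) → ℝ) (a b : ℝ),
      Integrable (fun ω => G (X ω) * (a + b * Y ω)) μ := by
    intro G a b
    refine ⟨((hmeasG G).mul (measurable_const.add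
      (measurable_const.mul hY))).aestronglyMeasurable, ?_⟩
    refine HasFiniteIntegral.of_bounded
      (C := (∑ x : Fin p → Fin m, |G x|) * (|a| + |b|)) (ae_of_all _ fun ω => ?_)
    have h1 : |G (X ω)| ≤ ∑ x : Fin p → Fin m, |G x| :=
      Finset.single_le_sum (fun x _ => abs_nonneg (G x)) (Finset.mem_univ (X ω))
    have h2 : |a + b * Y ω| ≤ |a| + |b| := by
      have hb : |b * Y ω| ≤ |b| := by
        rw [abs_mul]
        exact mul_le_of_le_one_right (abs_nonneg b) (hYbd ω)
      calc |a + b * Y ω| ≤ |a| + |b * Y ω| := abs_add_le _ _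
        _ ≤ |a| + |b| := by linarith
    calc ‖G (X ω) * (a + b * Y ω)‖ = |G (X ω)| * |a + b * Y ω| := by
          rw [Real.norm_eq_abs, abs_mul]
      _ ≤ (∑ x : Fin p → Fin m, |G x|) * (|a| + |b|) :=
          mul_le_mul h1 h2 (abs_nonneg _) (le_trans (abs_nonneg _) h1)
  have intGX : ∀ G : (Fin p → Fin m) → ℝ, Integrable (fun ω => G (X ω)) μ := by
    intro G; simpa using intG G 1 0
  have intGXY : ∀ G : (Fin p → Fin m) → ℝ,
      Integrable (fun ω => G (X ω) * Y ω) μ := by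
    intro G; simpa using intG G 0 1
  -- the conditioning identity
  set H : (Fin p → Fin m) → ℝ := fun x => ∑ i, f i (x i) with hHdef
  set W : Ω → ℝ := fun ω => H (X ω) with hWdef
  have key : ∀ G : (Fin p → Fin m) → ℝ,
      ∫ ω, G (X ω) * Y ω ∂μ = ∫ ω, G (X ω) * W ω ∂μ := by
    intro G
    have hXmX : Measurable[MeasurableSpace.comap X inferInstance] X :=
      fun s hs => ⟨s, hs, rfl⟩
    have hsm : StronglyMeasurable[MeasurableSpace.comap X inferInstance] fun ω => G (X ω) :=
      ((measurable_of_countable G).comp hXmX).stronglyMeasurable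
    have hpull := condExp_mul_of_stronglyMeasurable_left (μ := μ) hsm
      (show Integrable ((fun ω => G (X ω)) * Y) μ from intGXY G) hYint
    calc ∫ ω, G (X ω) * Y ω ∂μ
        = ∫ ω, ((fun ω => G (X ω)) * Y) ω ∂μ := rfl
      _ = ∫ ω, (μ[(fun ω => G (X ω)) * Y | MeasurableSpace.comap X inferInstance]) ω ∂μ :=
          (integral_condExp hmX).symm
      _ = ∫ ω, G (X ω) * (μ[Y | MeasurableSpace.comap X inferInstance]) ω ∂μ :=
          integral_congr_ae hpull
      _ = ∫ ω, G (X ω) * W ω ∂μ := by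
          refine integral_congr_ae ?_
          filter_upwards [hce] with ω hω
          rw [hω]
  -- the mean of Y
  set q : ℝ := ∫ ω, Y ω ∂μ with hqdef
  have hqval : q = (μ {ω | Y ω = 1}).toReal := by
    have hs : MeasurableSet {ω | Y ω = 1} := hY (measurableSet_singleton 1)
    have hind : ∀ ω, Y ω = Set.indicator {ω | Y ω = 1} (fun _ => (1 : ℝ)) ω := by
      intro ω
      rcases hbin ω with h | h
      · rw [h, Set.indicator_of_notMem]
        simp [Set.mem_setOf_eq, h]
      · rw [h, Set.indicator_of_mem]
        exact h
    rw [hqdef, integral_congr_ae (ae_of_all _ hind), integral_indicator_const _ hs]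
    simp
    rfl
  have hq0 : 0 < q := hqval ▸ hp0
  have hq1 : q < 1 := hqval ▸ hp1
  -- mean of W equals q
  have hIW : ∫ ω, W ω ∂μ = q := by
    have h1 : ∫ ω, W ω ∂μ = ∫ ω, (μ[Y | MeasurableSpace.comap X inferInstance]) ω ∂μ :=
      (integral_congr_ae hce).symm
    rw [h1, integral_condExp hmX]
  have hWint : Integrable W μ := by simpa using intG H 1 0
  have hW2int : Integrable (fun ω => (W ω) ^ 2) μ := by
    have := intG (fun x => (H x) ^ 2) 1 0
    simpa using this
  -- second moment and variance
  set I2 : ℝ := ∫ ω, (W ω) ^ 2 ∂μ with hI2def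
  set σ2 : ℝ := I2 - q ^ 2 with hσ2def
  have hWmem : MemLp W 2 μ := by
    refine MemLp.of_bound (hmeasG H).aestronglyMeasurable
      (∑ x : Fin p → Fin m, |H x|) (ae_of_all _ fun ω => ?_)
    rw [Real.norm_eq_abs]
    exact Finset.single_le_sum (fun x _ => abs_nonneg (H x)) (Finset.mem_univ (X ω))
  have hσ2var : σ2 = variance W μ := by
    rw [variance_eq_sub hWmem]
    simp only [hσ2def, hI2def]
    rw [hIW]
    rfl
  have hσ2pos : 0 < σ2 := by
    rw [hσ2var]
    exact hvar
  set σ : ℝ := Real.sqrt σ2 with hσdef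
  have hσpos : 0 < σ := Real.sqrt_pos.mpr hσ2pos
  have hσsq : σ ^ 2 = σ2 := Real.sq_sqrt hσ2pos.le
  set τ : ℝ := Real.sqrt (q * (1 - q)) with hτdef
  have hqq : 0 < q * (1 - q) := mul_pos hq0 (by linarith)
  have hτpos : 0 < τ := Real.sqrt_pos.mpr hqq
  have hτsq : τ ^ 2 = q * (1 - q) := Real.sq_sqrt hqq.le
  -- ∫ W * Y = I2
  have hWY : ∫ ω, W ω * Y ω ∂μ = I2 := by
    have := key H
    rw [hI2def]
    rw [show (fun ω => W ω * Y ω) = fun ω => H (X ω) * Y ω from rfl, this]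
    refine integral_congr_ae (ae_of_all _ fun ω => ?_)
    simp [hWdef, sq]
  -- ∫ F(X)·(W - q) identities
  have hFXW : ∀ G : (Fin p → Fin m) → ℝ, (∫ ω, G (X ω) ∂μ) = 0 →
      ∫ ω, G (X ω) * Y ω ∂μ = ∫ ω, G (X ω) * (W ω - q) ∂μ := by
    intro G hG0
    rw [key G]
    have hsplit : ∫ ω, G (X ω) * W ω ∂μ
        = ∫ ω, (G (X ω) * (W ω - q) + q * G (X ω)) ∂μ :=
      integral_congr_ae (ae_of_all _ fun ω => by ring)
    have hint1 : Integrable (fun ω => G (X ω) * (W ω - q)) μ := by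
      have := intG (fun x => G x * (H x - q)) 1 0
      simpa using this
    have hint2 : Integrable (fun ω => q * G (X ω)) μ := (intGX G).const_mul q
    rw [hsplit, integral_add hint1 hint2, integral_const_mul, hG0, mul_zero, add_zero]
  -- cross moment: ∫ (W - q)(Y - q) = σ2, and second moment of (Y - q)
  have hWq0 : ∫ ω, (W ω - q) ∂μ = 0 := by
    rw [integral_sub hWint (integrable_const q), hIW, integral_const]
    simp
  have hWqint : Integrable (fun ω => W ω - q) μ := hWint.sub (integrable_const q)
  have hWq2int : Integrable (fun ω => (W ω - q) ^ 2) μ := by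
    have := intG (fun x => (H x - q) ^ 2) 1 0
    simpa using this
  have hWq2 : ∫ ω, (W ω - q) ^ 2 ∂μ = σ2 := by
    have hsplit : ∫ ω, (W ω - q) ^ 2 ∂μ
        = ∫ ω, ((W ω) ^ 2 - (2 * q) * W ω + q ^ 2) ∂μ :=
      integral_congr_ae (ae_of_all _ fun ω => by ring)
    have hint1 : Integrable (fun ω => (W ω) ^ 2 - 2 * q * W ω) μ :=
      hW2int.sub (hWint.const_mul (2 * q))
    rw [hsplit, integral_add hint1 (integrable_const _),
      integral_sub hW2int (hWint.const_mul (2 * q)), integral_const_mul, hIW, integral_const]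
    simp only [measure_univ, probReal_univ, ENNReal.toReal_one, smul_eq_mul, one_mul]
    rw [hσ2def, hI2def]
    ring
  have hcross : ∫ ω, (W ω - q) * (Y ω - q) ∂μ = σ2 := by
    have hsplit : ∫ ω, (W ω - q) * (Y ω - q) ∂μ
        = ∫ ω, ((W ω - q) * Y ω - q * (W ω - q)) ∂μ :=
      integral_congr_ae (ae_of_all _ fun ω => by ring)
    have hint1 : Integrable (fun ω => (W ω - q) * Y ω) μ := by
      have := intG (fun x => H x - q) 0 1
      simpa using this
    have h1 : ∫ ω, (W ω - q) * Y ω ∂μ = ∫ ω, (W ω - q) * (W ω - q) ∂μ := by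
      have hG0 : (∫ ω, (fun x => H x - q) (X ω) ∂μ) = 0 := by
        simpa [hWdef] using hWq0
      have := hFXW (fun x => H x - q) hG0
      simpa [hWdef] using this
    have h2 : ∫ ω, (W ω - q) * (W ω - q) ∂μ = σ2 := by
      rw [← hWq2]
      exact integral_congr_ae (ae_of_all _ fun ω => by ring)
    rw [hsplit, integral_sub hint1 (hWqint.const_mul q), h1, h2, integral_const_mul,
      hWq0, mul_zero, sub_zero]
  have hYq2 : ∫ ω, (Y ω - q) ^ 2 ∂μ = q * (1 - q) := by
    have hsplit : ∫ ω, (Y ω - q) ^ 2 ∂μ = ∫ ω, (q ^ 2 + (1 - 2 * q) * Y ω) ∂μ := by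
      refine integral_congr_ae (ae_of_all _ fun ω => ?_)
      rcases hbin ω with h | h <;> simp only [h] <;> ring
    rw [hsplit, integral_add (integrable_const _) (hYint.const_mul _), integral_const,
      integral_const_mul, ← hqdef]
    simp only [measure_univ, probReal_univ, ENNReal.toReal_one, smul_eq_mul, one_mul]
    ring
  -- the optimizers
  set M : ℝ := σ / τ with hMdef
  set Ftil : (Fin p → Fin m) → ℝ := fun x => (H x - q) / σ with hFtildef
  set gstar : ℝ → ℝ := fun y => (y - q) / τ with hgstardef
  have hFtilmeas : Measurable Ftil := measurable_of_countable Ftil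
  have hgstarmeas : Measurable gstar :=
    (measurable_id.sub measurable_const).div_const τ
  have hFtil0 : (∫ ω, Ftil (X ω) ∂μ) = 0 := by
    have : (fun ω => Ftil (X ω)) = fun ω => (W ω - q) / σ := rfl
    rw [this, integral_div, hWq0, zero_div]
  have hFtil2 : (∫ ω, (Ftil (X ω)) ^ 2 ∂μ) = 1 := by
    have : (fun ω => (Ftil (X ω)) ^ 2) = fun ω => (W ω - q) ^ 2 / σ ^ 2 := by
      funext ω; simp [hFtildef, hWdef, div_pow]
    rw [this, integral_div, hWq2, hσsq, div_self hσ2pos.ne']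
  have hgstar0 : (∫ ω, gstar (Y ω) ∂μ) = 0 := by
    have : (fun ω => gstar (Y ω)) = fun ω => (Y ω - q) / τ := rfl
    rw [this, integral_div, integral_sub hYint (integrable_const q), integral_const, ← hqdef]
    simp
  have hgstar2 : (∫ ω, (gstar (Y ω)) ^ 2 ∂μ) = 1 := by
    have : (fun ω => (gstar (Y ω)) ^ 2) = fun ω => (Y ω - q) ^ 2 / τ ^ 2 := by
      funext ω; simp [hgstardef, div_pow]
    rw [this, integral_div, hYq2, hτsq, div_self hqq.ne']
  have hMval : (∫ ω, Ftil (X ω) * gstar (Y ω) ∂μ) = M := by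
    have heq : (fun ω => Ftil (X ω) * gstar (Y ω))
        = fun ω => ((W ω - q) * (Y ω - q)) / (σ * τ) := by
      funext ω
      simp only [hFtildef, hgstardef, hWdef]
      rw [div_mul_div_comm]
    rw [heq, integral_div, hcross, hMdef]
    rw [← hσsq]
    field_simp
  -- p is positive, so Ftil is separable
  have hppos : 0 < p := by
    rcases Nat.eq_zero_or_pos p with hp | hp
    · exfalso
      have hzero : W = (0 : Ω → ℝ) := by
        funext ω
        exact Finset.sum_eq_zero fun i _ => absurd i.isLt (by omega)
      rw [hzero, variance_zero] at hvar
      exact lt_irrefl 0 hvar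
    · exact hp
  have hsep : ∃ ξ : Fin p → Fin m → ℝ, ∀ x, Ftil x = ∑ i, ξ i (x i) := by
    refine ⟨fun i a => (f i a - q / p) / σ, fun x => ?_⟩
    have hpne : (p : ℝ) ≠ 0 := Nat.cast_ne_zero.mpr hppos.ne'
    simp only [hFtildef, hHdef]
    rw [← Finset.sum_div]
    congr 1
    rw [Finset.sum_sub_distrib, Finset.sum_const, Finset.card_univ, Fintype.card_fin,
      nsmul_eq_mul, mul_div_cancel₀ _ hpne]
  -- the sets
  set A : Set ℝ := {r : ℝ | ∃ F : (Fin p → Fin m) → ℝ, ∃ g : ℝ → ℝ,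
      Measurable F ∧ Measurable g ∧
      (∫ ω, F (X ω) ∂μ) = 0 ∧ (∫ ω, g (Y ω) ∂μ) = 0 ∧
      (∫ ω, (F (X ω)) ^ 2 ∂μ) = 1 ∧ (∫ ω, (g (Y ω)) ^ 2 ∂μ) = 1 ∧
      r = ∫ ω, F (X ω) * g (Y ω) ∂μ} with hAdef
  set B : Set ℝ := {r : ℝ | ∃ F : (Fin p → Fin m) → ℝ, ∃ g : ℝ → ℝ,
      Measurable F ∧ Measurable g ∧
      (∃ ξ : Fin p → Fin m → ℝ, ∀ x, F x = ∑ i, ξ i (x i)) ∧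
      (∫ ω, F (X ω) ∂μ) = 0 ∧ (∫ ω, g (Y ω) ∂μ) = 0 ∧
      (∫ ω, (F (X ω)) ^ 2 ∂μ) = 1 ∧ (∫ ω, (g (Y ω)) ^ 2 ∂μ) = 1 ∧
      r = ∫ ω, F (X ω) * g (Y ω) ∂μ} with hBdef
  have hMB : M ∈ B :=
    ⟨Ftil, gstar, hFtilmeas, hgstarmeas, hsep, hFtil0, hgstar0, hFtil2, hgstar2, hMval.symm⟩
  have hBA : B ⊆ A := by
    rintro r ⟨F, g, hF, hg, _, h0F, h0g, h2F, h2g, hr⟩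
    exact ⟨F, g, hF, hg, h0F, h0g, h2F, h2g, hr⟩
  -- upper bound
  have hub : ∀ r ∈ A, r ≤ M := by
    rintro r ⟨F, g, hF, hg, h0F, h0g, h2F, h2g, hr⟩
    set c : ℝ := g 1 - g 0 with hcdef
    have hgY : ∀ ω, g (Y ω) = g 0 + c * Y ω := by
      intro ω
      rcases hbin ω with h | h <;> rw [h] <;> simp [hcdef]
    -- mean-zero constraint on g
    have h0g' : g 0 + c * q = 0 := by
      have : ∫ ω, g (Y ω) ∂μ = g 0 + c * q := by
        rw [integral_congr_ae (ae_of_all _ hgY),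
          integral_add (integrable_const _) (hYint.const_mul c), integral_const,
          integral_const_mul, ← hqdef]
        simp
      rw [← this, h0g]
    -- second moment constraint on g
    have h2g' : c ^ 2 * (q * (1 - q)) = 1 := by
      have heval : ∫ ω, (g (Y ω)) ^ 2 ∂μ
          = (g 0) ^ 2 + (2 * g 0 * c + c ^ 2) * q := by
        have hsplit : ∫ ω, (g (Y ω)) ^ 2 ∂μ
            = ∫ ω, ((g 0) ^ 2 + (2 * g 0 * c + c ^ 2) * Y ω) ∂μ := by
          refine integral_congr_ae (ae_of_all _ fun ω => ?_)
          rcases hbin ω with h | h <;> simp only [hgY ω, h] <;> ring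
        rw [hsplit, integral_add (integrable_const _) (hYint.const_mul _), integral_const,
          integral_const_mul, ← hqdef]
        simp
      have h2 : (g 0) ^ 2 + (2 * g 0 * c + c ^ 2) * q = 1 := by rw [← heval, h2g]
      linear_combination h2 - (g 0 + c * q) * h0g'
    have habsc : |c| * τ = 1 := by
      have hsq : (|c| * τ) ^ 2 = 1 := by
        rw [mul_pow, sq_abs, hτsq]; exact h2g'
      have hfac : (|c| * τ - 1) * (|c| * τ + 1) = 0 := by linear_combination hsq
      rcases mul_eq_zero.mp hfac with h | h
      · linarith
      · linarith [mul_nonneg (abs_nonneg c) hτpos.le]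
    -- r = c * s
    set s : ℝ := ∫ ω, F (X ω) * (W ω - q) ∂μ with hsdef
    have hrs : r = c * s := by
      have hint1 : Integrable (fun ω => F (X ω) * Y ω) μ := intGXY F
      have h1 : ∫ ω, F (X ω) * g (Y ω) ∂μ = c * ∫ ω, F (X ω) * Y ω ∂μ := by
        have hsplit : ∫ ω, F (X ω) * g (Y ω) ∂μ
            = ∫ ω, (g 0 * F (X ω) + c * (F (X ω) * Y ω)) ∂μ := by
          refine integral_congr_ae (ae_of_all _ fun ω => ?_)
          simp only [hgY ω]; ring
        rw [hsplit, integral_add ((intGX F).const_mul _) (hint1.const_mul c),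
          integral_const_mul, integral_const_mul, h0F, mul_zero, zero_add]
      rw [hr, h1, hFXW F h0F, hsdef]
    -- |s| ≤ σ via Cauchy–Schwarz (elementary form)
    have hF2 : ∫ ω, (F (X ω)) ^ 2 ∂μ = 1 := h2F
    have hintF2 : Integrable (fun ω => (F (X ω)) ^ 2) μ := by
      have := intG (fun x => (F x) ^ 2) 1 0
      simpa using this
    have hintFWq : Integrable (fun ω => F (X ω) * (W ω - q)) μ := by
      have := intG (fun x => F x * (H x - q)) 1 0
      simpa using this
    have hsle : ∀ ε : ℝ, ε = 1 ∨ ε = -1 → ε * s ≤ σ := by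
      rintro ε hε
      have hnn : 0 ≤ ∫ ω, (σ * F (X ω) - ε * (W ω - q)) ^ 2 ∂μ :=
        integral_nonneg fun ω => sq_nonneg _
      have hexp : ∫ ω, (σ * F (X ω) - ε * (W ω - q)) ^ 2 ∂μ
          = 2 * σ2 - 2 * σ * (ε * s) := by
        have hε2 : ε ^ 2 = 1 := by rcases hε with h | h <;> rw [h] <;> norm_num
        have hsplit : ∫ ω, (σ * F (X ω) - ε * (W ω - q)) ^ 2 ∂μ
            = ∫ ω, (σ ^ 2 * (F (X ω)) ^ 2
                - (2 * σ * ε) * (F (X ω) * (W ω - q)) + ε ^ 2 * (W ω - q) ^ 2) ∂μ := by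
          refine integral_congr_ae (ae_of_all _ fun ω => ?_)
          ring
        have hintsub : Integrable
            (fun ω => σ ^ 2 * (F (X ω)) ^ 2 - (2 * σ * ε) * (F (X ω) * (W ω - q))) μ :=
          (hintF2.const_mul _).sub (hintFWq.const_mul _)
        rw [hsplit,
          integral_add hintsub (hWq2int.const_mul _),
          integral_sub (hintF2.const_mul _) (hintFWq.const_mul _),
          integral_const_mul, integral_const_mul, integral_const_mul,
          hF2, hWq2, ← hsdef, hσsq, hε2]
        ring
      rw [hexp] at hnn
      have hσσ : σ * σ = σ2 := by rw [← hσsq]; ring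
      have h1 : σ * (ε * s) ≤ σ2 := by linarith
      by_contra hcon
      push_neg at hcon
      have h2 : σ * σ < σ * (ε * s) := mul_lt_mul_of_pos_left hcon hσpos
      linarith
    have habs_s : |s| ≤ σ := by
      rw [abs_le]
      constructor
      · have := hsle (-1) (Or.inr rfl)
        linarith
      · have := hsle 1 (Or.inl rfl)
        linarith
    -- conclude
    have hcval : |c| = 1 / τ := by
      field_simp at habsc ⊢
      linarith [habsc]
    calc r = c * s := hrs
      _ ≤ |c * s| := le_abs_self _
      _ = |c| * |s| := abs_mul _ _
      _ ≤ |c| * σ := mul_le_mul_of_nonneg_left habs_s (abs_nonneg c)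
      _ = σ / τ := by rw [hcval]; field_simp
      _ = M := rfl
  -- assemble
  have hMA : M ∈ A := hBA hMB
  have hbddA : BddAbove A := ⟨M, fun r hr => hub r hr⟩
  have hbddB : BddAbove B := ⟨M, fun r hr => hub r (hBA hr)⟩
  have hA : sSup A = M :=
    le_antisymm (csSup_le ⟨M, hMA⟩ fun r hr => hub r hr) (le_csSup hbddA hMA)
  have hB : sSup B = M :=
    le_antisymm (csSup_le ⟨M, hMB⟩ fun r hr => hub r (hBA hr)) (le_csSup hbddB hMB)
  rw [hA, hB]
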